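/- Suppose β ≥ (1+√5)/2 and the (−β)-expansion d_{−β}(1) of 1 is not periodic with odd period. Then the (−β)-shift Σ_{−β} is topologically mixing: for any two words v, w in its language there exists N such that for all n ≥ N, σ^n([v]) ∩ [w] ≠ ∅. -/

import Mathlib

/-- The (−β)-transformation `T_{−β}(x) = −βx + ⌊βx⌋ + 1` (as a map on ℝ). -/
noncomputable def Tneg (β : ℝ) : ℝ → ℝ := fun y => -β * y + ⌊β * y⌋ + 1

/-- The (−β)-expansion digits of `x ∈ (0,1]`: `(d_{−β}(x))_i = j` iff
`T_{−β}^{i−1}(x) ∈ I_j`, which amounts to `j = ⌊β · T_{−β}^{i−1}(x)⌋ + 1`. -/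
noncomputable def dExp (β : ℝ) (x : ℝ) : ℕ → ℕ :=
  fun i => (⌊β * ((Tneg β)^[i] x)⌋).toNat + 1

/-- The (−β)-shift: the closure of the set of (−β)-expansions. -/
noncomputable def SigmaNegBeta (β : ℝ) : Set (ℕ → ℕ) :=
  closure {y | ∃ x ∈ Set.Ioc (0 : ℝ) 1, y = dExp β x}

def shift (x : ℕ → ℕ) : ℕ → ℕ := fun n => x (n + 1)

namespace NBaux
open Set

lemma dExp_add (β x : ℝ) (n i : ℕ) : dExp β x (n+i) = dExp β ((Tneg β)^[n] x) i := by
  unfold dExp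
  rw [add_comm n i, Function.iterate_add_apply]

structure Nice (β : ℝ) : Prop where
  hgold : (1 + Real.sqrt 5) / 2 ≤ β
  hint : ∀ z : ℤ, β ≠ (z:ℝ)

namespace Nice
variable {β : ℝ} (h : Nice β)
lemma sqrt5_lt : (2.23:ℝ) ≤ Real.sqrt 5 := by
  rw [show (2.23:ℝ) = Real.sqrt (2.23^2) by rw [Real.sqrt_sq]; norm_num]
  apply Real.sqrt_le_sqrt; norm_num
include h
lemma one_lt : (1.6:ℝ) < β := by have := sqrt5_lt; have := h.hgold; linarith
lemma pos : (0:ℝ) < β := by linarith [h.one_lt]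
lemma gold_sq : β + 1 ≤ β * β := by
  have h5 : Real.sqrt 5 ^ 2 = 5 := Real.sq_sqrt (by norm_num)
  have h2 : Real.sqrt 5 ≤ 2*β - 1 := by have := h.hgold; linarith
  nlinarith [h5, h2, Real.sqrt_nonneg 5]
lemma floor_ge_one : 1 ≤ ⌊β⌋ := by rw [Int.le_floor]; push_cast; linarith [h.one_lt]
lemma frac_pos : 0 < β - (⌊β⌋:ℝ) := by
  rcases lt_or_eq_of_le (Int.floor_le β) with hlt | heq
  · linarith
  · exact absurd heq.symm (h.hint ⌊β⌋)
lemma frac_lt_one : β - (⌊β⌋:ℝ) < 1 := by linarith [Int.lt_floor_add_one β]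
lemma floor_real_ge_one : (1:ℝ) ≤ (⌊β⌋:ℝ) := by exact_mod_cast h.floor_ge_one
end Nice

lemma floor_eq_c {c : ℤ} {y : ℝ} (h1 : (c:ℝ) ≤ y) (h2 : y < (c:ℝ)+1) : ⌊y⌋ = c := by
  rw [Int.floor_eq_iff]; constructor <;> [exact h1; exact_mod_cast h2]

variable {β : ℝ}

lemma Tneg_val {c : ℤ} {s : ℝ} (h1 : (c:ℝ) ≤ β * s) (h2 : β * s < (c:ℝ)+1) :
    Tneg β s = (c:ℝ) + 1 - β * s := by
  unfold Tneg; rw [floor_eq_c h1 h2]; ring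

lemma img_Ioo (hβ0 : 0 < β) {p q : ℝ} (c : ℤ) (hc1 : (c:ℝ) ≤ β*p) (hc2 : β*q ≤ (c:ℝ)+1) :
    Set.Ioo ((c:ℝ)+1-β*q) ((c:ℝ)+1-β*p) ⊆ Tneg β '' Set.Ioo p q := by
  rintro y ⟨hy1, hy2⟩
  have hbe : β * (((c:ℝ)+1-y)/β) = (c:ℝ)+1-y := mul_div_cancel₀ _ (ne_of_gt hβ0)
  have hbs1 : (c:ℝ) ≤ β * (((c:ℝ)+1-y)/β) := by rw [hbe]; linarith
  have hbs2 : β * (((c:ℝ)+1-y)/β) < (c:ℝ)+1 := by rw [hbe]; linarith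
  refine ⟨((c:ℝ)+1-y)/β, ⟨?_, ?_⟩, ?_⟩
  · rw [lt_div_iff₀ hβ0, mul_comm]; linarith
  · rw [div_lt_iff₀ hβ0, mul_comm]; linarith
  · rw [Tneg_val hbs1 hbs2, hbe]; ring

lemma img_Ico (hβ0 : 0 < β) {p q : ℝ} (c : ℤ) (hc1 : (c:ℝ) ≤ β*p) (hc2 : β*q ≤ (c:ℝ)+1) :
    Set.Ioc ((c:ℝ)+1-β*q) ((c:ℝ)+1-β*p) ⊆ Tneg β '' Set.Ico p q := by
  rintro y ⟨hy1, hy2⟩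
  have hbe : β * (((c:ℝ)+1-y)/β) = (c:ℝ)+1-y := mul_div_cancel₀ _ (ne_of_gt hβ0)
  have hbs1 : (c:ℝ) ≤ β * (((c:ℝ)+1-y)/β) := by rw [hbe]; linarith
  have hbs2 : β * (((c:ℝ)+1-y)/β) < (c:ℝ)+1 := by rw [hbe]; linarith
  refine ⟨((c:ℝ)+1-y)/β, ⟨?_, ?_⟩, ?_⟩
  · rw [le_div_iff₀ hβ0, mul_comm]; linarith
  · rw [div_lt_iff₀ hβ0, mul_comm]; linarith
  · rw [Tneg_val hbs1 hbs2, hbe]; ring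

section Machine
variable (β : ℝ) (J₀ : Set ℝ)

def img (n : ℕ) : Set ℝ := (Tneg β)^[n] '' J₀

/-- fractional part -/
noncomputable def Fr : ℝ := β - ⌊β⌋

/-- orbit of 1 -/
noncomputable def torb (k : ℕ) : ℝ := (Tneg β)^[k] 1

def Aclaim (a : ℝ) (n : ℕ) : Prop := Set.Ioo 0 a ⊆ img β J₀ n
def Kclaim (m : ℝ) (n : ℕ) : Prop := Set.Ioo (1-m) 1 ⊆ img β J₀ n
def HRc (k : ℕ) (δ : ℝ) (n : ℕ) : Prop := Set.Ioo (torb β k) (torb β k + δ) ⊆ img β J₀ n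
def HLc (k : ℕ) (δ : ℝ) (n : ℕ) : Prop := Set.Ioo (torb β k - δ) (torb β k) ⊆ img β J₀ n
def Gd (n : ℕ) : Prop := Set.Ioc (1 - Fr β) 1 ⊆ img β J₀ n
def Cov (n : ℕ) : Prop := Set.Ioo 0 1 ⊆ img β J₀ n
def Done : Prop := ∃ N, ∀ n ≥ N, Cov β J₀ n

variable {β J₀}

lemma Fr_pos (h : Nice β) : 0 < Fr β := h.frac_pos

lemma Fr_lt_one (h : Nice β) : Fr β < 1 := h.frac_lt_one

lemma img_zero : img β J₀ 0 = J₀ := by simp [img]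

lemma img_succ (n : ℕ) : Tneg β '' (img β J₀ n) = img β J₀ (n+1) := by
  unfold img; rw [Function.iterate_succ']; exact (Set.image_comp _ _ _).symm

lemma img_step {S : Set ℝ} {n : ℕ} (hS : S ⊆ img β J₀ n) :
    Tneg β '' S ⊆ img β J₀ (n+1) := by
  rw [← img_succ]; exact Set.image_mono hS

lemma mem_img_step {x : ℝ} {n : ℕ} (hx : x ∈ img β J₀ n) : Tneg β x ∈ img β J₀ (n+1) := by
  rw [← img_succ]; exact Set.mem_image_of_mem _ hx

lemma Tneg_mem_Ioc (β x : ℝ) : Tneg β x ∈ Set.Ioc (0:ℝ) 1 := by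
  unfold Tneg
  constructor
  · have := Int.lt_floor_add_one (β * x); linarith
  · have := Int.floor_le (β * x); linarith

lemma img_sub (hJ : J₀ ⊆ Set.Ioc 0 1) : ∀ n, img β J₀ n ⊆ Set.Ioc 0 1 := by
  intro n
  cases n with
  | zero => rw [img_zero]; exact hJ
  | succ m =>
    rintro x ⟨y, _, rfl⟩
    rw [Function.iterate_succ_apply']
    exact Tneg_mem_Ioc β _

lemma piece_bounds (hJ : J₀ ⊆ Set.Ioc 0 1) {p q : ℝ} {n : ℕ}
    (hsub : Set.Ioo p q ⊆ img β J₀ n) (hpq : p < q) : 0 ≤ p ∧ q ≤ 1 := by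
  have key : Set.Ioo p q ⊆ Set.Ioc 0 1 := hsub.trans (img_sub hJ n)
  constructor
  · by_contra hp
    push_neg at hp
    have hx : (p + min q 0)/2 ∈ Set.Ioo p q := by
      have h1 : p < min q 0 := lt_min hpq (by linarith)
      have : min q 0 ≤ q := min_le_left _ _
      constructor <;> linarith
    have h2 := (key hx).1
    have hle : min q 0 ≤ 0 := min_le_right _ _
    have h1 : p < min q 0 := lt_min hpq (by linarith)
    linarith
  · by_contra hq
    push_neg at hq
    have hx : (max p 1 + q)/2 ∈ Set.Ioo p q := by
      have h1 : max p 1 < q := max_lt hpq hq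
      have : p ≤ max p 1 := le_max_left _ _
      constructor <;> linarith
    have h2 := (key hx).2
    have hge : (1:ℝ) ≤ max p 1 := le_max_right _ _
    have h1 : max p 1 < q := max_lt hpq hq
    linarith

lemma torb_succ (k : ℕ) : torb β (k+1) = Tneg β (torb β k) := by
  unfold torb; rw [Function.iterate_succ_apply']

lemma torb_mem (h : Nice β) (k : ℕ) : torb β k ∈ Set.Ioc (0:ℝ) 1 := by
  cases k with
  | zero =>
    simp only [torb, Function.iterate_zero_apply]
    exact ⟨by norm_num, le_refl 1⟩
  | succ m => rw [torb_succ]; exact Tneg_mem_Ioc β _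

lemma torb_one (h : Nice β) : torb β 1 = (⌊β⌋:ℝ) + 1 - β := by
  show Tneg β ((Tneg β)^[0] 1) = _
  rw [Function.iterate_zero_apply]
  have h1 : ((⌊β⌋:ℤ):ℝ) ≤ β * 1 := by rw [mul_one]; exact Int.floor_le β
  have h2 : β * 1 < ((⌊β⌋:ℤ):ℝ) + 1 := by rw [mul_one]; exact Int.lt_floor_add_one β
  rw [Tneg_val h1 h2]; ring

/-- the covering state persists -/
lemma cov_succ (h : Nice β) {n : ℕ} (hc : Cov β J₀ n) : Cov β J₀ (n+1) := by
  have hβ0 := h.pos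
  have h1 : Set.Ioo (0:ℝ) (1/β) ⊆ img β J₀ n := by
    apply Set.Subset.trans _ hc
    apply Set.Ioo_subset_Ioo_right
    rw [div_le_one hβ0]; linarith [h.one_lt]
  have h2 := (img_Ioo hβ0 (0:ℤ) (by simp) (by
      rw [mul_one_div, div_self (ne_of_gt hβ0)]; norm_num)).trans (img_step h1)
  unfold Cov
  intro x hx
  apply h2
  rw [mul_one_div, div_self (ne_of_gt hβ0)]
  push_cast
  simpa using hx

lemma A_win (h : Nice β) {a : ℝ} {n : ℕ} (hA : Aclaim β J₀ a n) (ha : 1/β ≤ a) :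
    Cov β J₀ (n+1) := by
  have hβ0 := h.pos
  have h1 : Set.Ioo (0:ℝ) (1/β) ⊆ img β J₀ n :=
    (Set.Ioo_subset_Ioo_right ha).trans hA
  have h2 := (img_Ioo hβ0 (0:ℤ) (by simp) (by
      rw [mul_one_div, div_self (ne_of_gt hβ0)]; norm_num)).trans (img_step h1)
  intro x hx
  apply h2
  rw [mul_one_div, div_self (ne_of_gt hβ0)]
  push_cast
  simpa using hx

lemma win_done (h : Nice β) {a : ℝ} {n : ℕ} (hA : Aclaim β J₀ a n) (ha : 1/β ≤ a) :
    Done β J₀ := by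
  refine ⟨n+1, ?_⟩
  intro m hm
  induction m, hm using Nat.le_induction with
  | base => exact A_win h hA ha
  | succ m hm ih => exact cov_succ h ih

lemma AtoK (h : Nice β) {a : ℝ} {n : ℕ} (hA : Aclaim β J₀ a n) (ha0 : 0 < a)
    (ha : a ≤ 1/β) : Kclaim β J₀ (β*a) (n+1) := by
  have hβ0 := h.pos
  have h2 := (img_Ioo hβ0 (0:ℤ) (by simp) (by
      push_cast
      rw [le_div_iff₀ hβ0] at ha; linarith [ha])).trans (img_step hA)
  intro x hx
  apply h2
  push_cast
  simp only [mul_zero]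
  constructor
  · have := hx.1; linarith
  · have := hx.2; linarith


lemma Kgood (h : Nice β) {m : ℝ} {n : ℕ} (hK : Kclaim β J₀ m n) (hm : Fr β / β < m) :
    Gd β J₀ (n+1) := by
  have hβ0 := h.pos
  have hLle : ((⌊β⌋:ℝ)) ≤ β := Int.floor_le β
  have hLgt : β < (⌊β⌋:ℝ) + 1 := Int.lt_floor_add_one β
  have hmm : Fr β < β * m := by
    rw [div_lt_iff₀ hβ0] at hm; linarith [hm]
  have hsub : Set.Ico ((⌊β⌋:ℝ)/β) 1 ⊆ img β J₀ n := by
    refine Set.Subset.trans ?_ hK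
    intro x hx
    have h1 : (1-m) < (⌊β⌋:ℝ)/β := by
      rw [lt_div_iff₀ hβ0]
      unfold Fr at hmm; nlinarith
    exact ⟨lt_of_lt_of_le h1 hx.1, hx.2⟩
  have hcd : β * ((⌊β⌋:ℝ)/β) = (⌊β⌋:ℝ) := mul_div_cancel₀ _ (ne_of_gt hβ0)
  have himg := (img_Ico hβ0 ⌊β⌋ (le_of_eq hcd.symm)
      (by rw [mul_one]; push_cast; linarith)).trans (img_step hsub)
  intro x hx
  apply himg
  simp only [Set.mem_Ioc, hcd, mul_one]
  unfold Fr at hx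
  simp only [Set.mem_Ioc] at hx
  push_cast
  exact ⟨by linarith [hx.1], by linarith [hx.2]⟩

lemma Knosplit (h : Nice β) {m : ℝ} {n : ℕ} (hK : Kclaim β J₀ m n) (hm0 : 0 < m)
    (hm : m ≤ Fr β / β) : HRc β J₀ 1 (β*m) (n+1) := by
  have hβ0 := h.pos
  have hLle : ((⌊β⌋:ℝ)) ≤ β := Int.floor_le β
  have hLgt : β < (⌊β⌋:ℝ) + 1 := Int.lt_floor_add_one β
  have hmm : β * m ≤ Fr β := by
    rw [le_div_iff₀ hβ0] at hm; linarith [hm]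
  unfold Fr at hmm
  have himg := (img_Ioo hβ0 ⌊β⌋ (by nlinarith) (by rw [mul_one]; push_cast; linarith)).trans
      (img_step hK)
  intro x hx
  apply himg
  rw [torb_one h] at hx
  simp only [Set.mem_Ioo] at hx ⊢
  push_cast
  exact ⟨by linarith [hx.1], by linarith [hx.2]⟩

lemma Ksplit_spawnA (h : Nice β) {m : ℝ} {n : ℕ} (hK : Kclaim β J₀ m n)
    (hm : Fr β / β < m) : Aclaim β J₀ (min (β*m - Fr β) 1) (n+1) := by
  have hβ0 := h.pos
  have hL1 := h.floor_real_ge_one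
  have hLle : ((⌊β⌋:ℝ)) ≤ β := Int.floor_le β
  have hLgt : β < (⌊β⌋:ℝ) + 1 := Int.lt_floor_add_one β
  have hFr := h.frac_pos
  have hmm : Fr β < β * m := by rw [div_lt_iff₀ hβ0] at hm; linarith [hm]
  unfold Fr at hmm hFr ⊢
  by_cases hcase : β*m - (β - (⌊β⌋:ℝ)) ≤ 1
  · -- min is β*m - Fr
    have hsub : Set.Ioo (1-m) ((⌊β⌋:ℝ)/β) ⊆ img β J₀ n := by
      refine Set.Subset.trans ?_ hK
      intro x hx
      refine ⟨hx.1, ?_⟩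
      have : ((⌊β⌋:ℝ)/β) < 1 := by rw [div_lt_one hβ0]; linarith
      linarith [hx.2]
    have hcd : β * ((⌊β⌋:ℝ)/β) = (⌊β⌋:ℝ) := mul_div_cancel₀ _ (ne_of_gt hβ0)
    have himg := (img_Ioo hβ0 (⌊β⌋ - 1) (by push_cast; nlinarith)
        (by rw [hcd]; push_cast; linarith)).trans (img_step hsub)
    intro x hx
    apply himg
    rw [hcd]
    simp only [Set.mem_Ioo] at hx ⊢
    rw [min_eq_left hcase] at hx
    push_cast
    exact ⟨by linarith [hx.1], by linarith [hx.2]⟩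
  · -- min is 1
    push_neg at hcase
    have hsub : Set.Ioo (((⌊β⌋:ℝ)-1)/β) ((⌊β⌋:ℝ)/β) ⊆ img β J₀ n := by
      refine Set.Subset.trans ?_ hK
      intro x hx
      constructor
      · have : 1 - m ≤ ((⌊β⌋:ℝ)-1)/β := by
          rw [le_div_iff₀ hβ0]; nlinarith
        linarith [hx.1]
      · have : ((⌊β⌋:ℝ)/β) < 1 := by rw [div_lt_one hβ0]; linarith
        linarith [hx.2]
    have hcd : β * ((⌊β⌋:ℝ)/β) = (⌊β⌋:ℝ) := mul_div_cancel₀ _ (ne_of_gt hβ0)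
    have hcd2 : β * (((⌊β⌋:ℝ)-1)/β) = (⌊β⌋:ℝ)-1 := mul_div_cancel₀ _ (ne_of_gt hβ0)
    have himg := (img_Ioo hβ0 (⌊β⌋ - 1) (by rw [hcd2]; push_cast; linarith)
        (by rw [hcd]; push_cast; linarith)).trans (img_step hsub)
    intro x hx
    apply himg
    rw [hcd, hcd2]
    simp only [Set.mem_Ioo] at hx ⊢
    rw [min_eq_right (le_of_lt hcase)] at hx
    push_cast
    exact ⟨by linarith [hx.1], by linarith [hx.2]⟩

lemma Gd_succ (h : Nice β) {n : ℕ} (hG : Gd β J₀ n) : Gd β J₀ (n+1) := by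
  have hβ0 := h.pos
  have hβ1 : (1:ℝ) < β := by linarith [h.one_lt]
  have hLle : ((⌊β⌋:ℝ)) ≤ β := Int.floor_le β
  have hLgt : β < (⌊β⌋:ℝ) + 1 := Int.lt_floor_add_one β
  have hFr := h.frac_pos
  have hsub : Set.Ico ((⌊β⌋:ℝ)/β) 1 ⊆ img β J₀ n := by
    refine Set.Subset.trans ?_ hG
    intro x hx
    constructor
    · have h1 : (1 - Fr β) < (⌊β⌋:ℝ)/β := by
        rw [lt_div_iff₀ hβ0]
        unfold Fr; nlinarith
      linarith [hx.1]
    · linarith [hx.2]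
  have hcd : β * ((⌊β⌋:ℝ)/β) = (⌊β⌋:ℝ) := mul_div_cancel₀ _ (ne_of_gt hβ0)
  have himg := (img_Ico hβ0 ⌊β⌋ (le_of_eq hcd.symm)
      (by rw [mul_one]; push_cast; linarith)).trans (img_step hsub)
  intro x hx
  apply himg
  simp only [Set.mem_Ioc, hcd, mul_one] at hx ⊢
  unfold Fr at hx
  push_cast
  exact ⟨by linarith [hx.1], by linarith [hx.2]⟩

lemma Gd_spawnA (h : Nice β) {n : ℕ} (hG : Gd β J₀ n) :
    Aclaim β J₀ (min ((β-1) * Fr β) 1) (n+1) := by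
  have hβ0 := h.pos
  have hβ1 : (1:ℝ) < β := by linarith [h.one_lt]
  have hLle : ((⌊β⌋:ℝ)) ≤ β := Int.floor_le β
  have hLgt : β < (⌊β⌋:ℝ) + 1 := Int.lt_floor_add_one β
  have hFr := h.frac_pos
  have hFr1 := h.frac_lt_one
  unfold Fr at hFr hFr1 ⊢
  by_cases hcase : (β-1) * (β - (⌊β⌋:ℝ)) ≤ 1
  · have hsub : Set.Ioo (1-(β - (⌊β⌋:ℝ))) ((⌊β⌋:ℝ)/β) ⊆ img β J₀ n := by
      refine Set.Subset.trans ?_ hG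
      intro x hx
      refine ⟨?_, ?_⟩
      · unfold Fr; exact hx.1
      · have : ((⌊β⌋:ℝ)/β) < 1 := by rw [div_lt_one hβ0]; linarith
        linarith [hx.2]
    have hcd : β * ((⌊β⌋:ℝ)/β) = (⌊β⌋:ℝ) := mul_div_cancel₀ _ (ne_of_gt hβ0)
    have himg := (img_Ioo hβ0 (⌊β⌋ - 1) (by push_cast; nlinarith)
        (by rw [hcd]; push_cast; linarith)).trans (img_step hsub)
    intro x hx
    apply himg
    rw [hcd]
    simp only [Set.mem_Ioo] at hx ⊢
    rw [min_eq_left hcase] at hx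
    push_cast
    exact ⟨by linarith [hx.1], by nlinarith [hx.2]⟩
  · push_neg at hcase
    have hsub : Set.Ioo (((⌊β⌋:ℝ)-1)/β) ((⌊β⌋:ℝ)/β) ⊆ img β J₀ n := by
      refine Set.Subset.trans ?_ hG
      intro x hx
      constructor
      · have : 1 - (β - (⌊β⌋:ℝ)) ≤ ((⌊β⌋:ℝ)-1)/β := by
          rw [le_div_iff₀ hβ0]; nlinarith
        unfold Fr; linarith [hx.1]
      · have : ((⌊β⌋:ℝ)/β) < 1 := by rw [div_lt_one hβ0]; linarith
        linarith [hx.2]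
    have hcd : β * ((⌊β⌋:ℝ)/β) = (⌊β⌋:ℝ) := mul_div_cancel₀ _ (ne_of_gt hβ0)
    have hcd2 : β * (((⌊β⌋:ℝ)-1)/β) = (⌊β⌋:ℝ)-1 := mul_div_cancel₀ _ (ne_of_gt hβ0)
    have himg := (img_Ioo hβ0 (⌊β⌋ - 1) (by rw [hcd2]; push_cast; linarith)
        (by rw [hcd]; push_cast; linarith)).trans (img_step hsub)
    intro x hx
    apply himg
    rw [hcd, hcd2]
    simp only [Set.mem_Ioo] at hx ⊢
    rw [min_eq_right (le_of_lt hcase)] at hx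
    push_cast
    exact ⟨by linarith [hx.1], by linarith [hx.2]⟩

lemma one_mem_Gd (h : Nice β) {n : ℕ} (hG : Gd β J₀ n) : (1:ℝ) ∈ img β J₀ n := by
  apply hG
  have := h.frac_pos
  unfold Fr
  exact ⟨by linarith, le_refl 1⟩

lemma Tneg_one (h : Nice β) : Tneg β 1 = 1 - Fr β := by
  have h1 : ((⌊β⌋:ℤ):ℝ) ≤ β * 1 := by rw [mul_one]; exact Int.floor_le β
  have h2 : β * 1 < ((⌊β⌋:ℤ):ℝ) + 1 := by rw [mul_one]; exact Int.lt_floor_add_one β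
  rw [Tneg_val h1 h2]; unfold Fr; ring


set_option maxHeartbeats 1000000 in
/-- One run of a piece hugging the orbit of 1: it grows until it splits,
producing an anchored piece `Ioo 0 u` and a piece `Ioo (1-v) 1` with
`u + v ≥ min (β δ) 1`. -/
lemma Lrun (h : Nice β) (hJ : J₀ ⊆ Set.Ioc 0 1) :
    ∀ (j k : ℕ) (δ : ℝ) (n : ℕ), 0 < δ →
    (HRc β J₀ k δ n ∨ HLc β J₀ k δ n) →
    1 < β^j * δ →
    ∃ n' u v, 0 ≤ u ∧ u ≤ 1 ∧ 0 ≤ v ∧ v ≤ 1 ∧ min (β*δ) 1 ≤ u + v ∧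
      (0 < u → Aclaim β J₀ u n') ∧ (0 < v → Kclaim β J₀ v n') := by
  have hβ0 := h.pos
  have hβ1 : (1:ℝ) < β := by linarith [h.one_lt]
  intro j
  induction j with
  | zero =>
    intro k δ n hδ hcl hfuel
    rw [pow_zero, one_mul] at hfuel
    exfalso
    rcases hcl with hcl | hcl
    · obtain ⟨h1, h2⟩ := piece_bounds hJ hcl (by linarith)
      linarith
    · obtain ⟨h1, h2⟩ := piece_bounds hJ hcl (by linarith)
      linarith
  | succ j ih =>
    intro k δ n hδ hcl hfuel
    set t := torb β k with htdef
    have ht : t ∈ Set.Ioc (0:ℝ) 1 := torb_mem h k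
    set c := ⌊β * t⌋ with hcdef
    have hcle : (c:ℝ) ≤ β * t := Int.floor_le _
    have hclt : β * t < (c:ℝ) + 1 := Int.lt_floor_add_one _
    have htv : torb β (k+1) = (c:ℝ) + 1 - β*t := by
      rw [torb_succ, Tneg_val hcle hclt]
    have ht1 : torb β (k+1) ∈ Set.Ioc (0:ℝ) 1 := torb_mem h (k+1)
    have hc0z : (0:ℤ) ≤ c := Int.floor_nonneg.mpr (by nlinarith [ht.1])
    have hc0 : (0:ℝ) ≤ (c:ℝ) := by exact_mod_cast hc0z
    have hfuel' : 1 < β^j * (β*δ) := by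
      rw [pow_succ] at hfuel; nlinarith [hfuel]
    have hsummono : min (β*δ) 1 ≤ min (β*(β*δ)) 1 := by
      apply min_le_min _ (le_refl 1)
      nlinarith [mul_pos hβ0 hδ, hβ1, hδ]
    clear_value c
    clear hcdef
    rcases hcl with hcl | hcl
    · by_cases hsp : t + δ ≤ ((c:ℝ)+1)/β
      · -- no split
        have hc2 : β * (t + δ) ≤ (c:ℝ) + 1 := by
          rw [le_div_iff₀ hβ0] at hsp; linarith [hsp]
        have himg := (img_Ioo hβ0 c hcle hc2).trans (img_step hcl)
        have hnew : HLc β J₀ (k+1) (β*δ) (n+1) := by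
          intro x hx
          apply himg
          rw [htv] at hx
          simp only [Set.mem_Ioo] at hx ⊢
          exact ⟨by linarith [hx.1], by linarith [hx.2]⟩
        obtain ⟨n', u, v, h1, h2, h3, h4, h5, h6, h7⟩ :=
          ih (k+1) (β*δ) (n+1) (by positivity) (Or.inr hnew) hfuel'
        exact ⟨n', u, v, h1, h2, h3, h4, le_trans hsummono h5, h6, h7⟩
      · -- split
        push_neg at hsp
        have hcb : (c:ℝ)+1 < β*(t+δ) := by
          rw [div_lt_iff₀ hβ0] at hsp; linarith [hsp]
        -- left product : anchored piece Ioo 0 (torb (k+1))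
        have hsubL : Set.Ioo t (((c:ℝ)+1)/β) ⊆ img β J₀ n := by
          refine Set.Subset.trans ?_ hcl
          intro x hx
          refine ⟨hx.1, ?_⟩
          have : x < ((c:ℝ)+1)/β := hx.2
          rw [lt_div_iff₀ hβ0] at this
          nlinarith [hsp]
        have hcdL : β * (((c:ℝ)+1)/β) = (c:ℝ)+1 := mul_div_cancel₀ _ (ne_of_gt hβ0)
        have himgL := (img_Ioo hβ0 c hcle (le_of_eq hcdL)).trans (img_step hsubL)
        have hAu : Aclaim β J₀ (torb β (k+1)) (n+1) := by
          intro x hx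
          apply himgL
          rw [hcdL]
          rw [htv] at hx
          simp only [Set.mem_Ioo] at hx ⊢
          exact ⟨by linarith [hx.1], by linarith [hx.2]⟩
        -- right product
        by_cases hvv : t + δ ≤ ((c:ℝ)+2)/β
        · -- v = β(t+δ) - (c+1)
          have hsubR : Set.Ico (((c:ℝ)+1)/β) (t+δ) ⊆ img β J₀ n := by
            refine Set.Subset.trans ?_ hcl
            intro x hx
            constructor
            · have : ((c:ℝ)+1)/β > t := by rw [gt_iff_lt, lt_div_iff₀ hβ0]; linarith
              linarith [hx.1]
            · exact hx.2
          have hcdR : β * (((c:ℝ)+1)/β) = (c:ℝ)+1 := mul_div_cancel₀ _ (ne_of_gt hβ0)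
          have hc2R : β * (t+δ) ≤ ((c:ℝ)+1) + 1 := by
            rw [le_div_iff₀ hβ0] at hvv; linarith [hvv]
          have himgR := (img_Ico hβ0 (c+1) (by push_cast; rw [hcdR]) (by push_cast; linarith)).trans
              (img_step hsubR)
          have hKv : Kclaim β J₀ (β*(t+δ) - ((c:ℝ)+1)) (n+1) := by
            intro x hx
            apply himgR
            rw [hcdR]
            simp only [Set.mem_Ioo] at hx
            push_cast
            exact ⟨by linarith [hx.1], by linarith [hx.2]⟩
          refine ⟨n+1, torb β (k+1), β*(t+δ) - ((c:ℝ)+1), le_of_lt ht1.1, ht1.2,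
            by linarith, by linarith, ?_, fun _ => hAu, fun _ => hKv⟩
          rw [htv]
          have : (c:ℝ) + 1 - β*t + (β*(t+δ) - ((c:ℝ)+1)) = β*δ := by ring
          rw [this]
          exact min_le_left _ _
        · -- v = 1
          push_neg at hvv
          have hsubR : Set.Ico (((c:ℝ)+1)/β) (((c:ℝ)+2)/β) ⊆ img β J₀ n := by
            refine Set.Subset.trans ?_ hcl
            intro x hx
            constructor
            · have : ((c:ℝ)+1)/β > t := by rw [gt_iff_lt, lt_div_iff₀ hβ0]; linarith
              linarith [hx.1]
            · have : x < ((c:ℝ)+2)/β := hx.2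
              linarith [hvv]
          have hcdR : β * (((c:ℝ)+1)/β) = (c:ℝ)+1 := mul_div_cancel₀ _ (ne_of_gt hβ0)
          have hcdR2 : β * (((c:ℝ)+2)/β) = (c:ℝ)+2 := mul_div_cancel₀ _ (ne_of_gt hβ0)
          have himgR := (img_Ico hβ0 (c+1) (by push_cast; rw [hcdR])
              (by push_cast; rw [hcdR2]; linarith)).trans (img_step hsubR)
          have hKv : Kclaim β J₀ 1 (n+1) := by
            intro x hx
            apply himgR
            rw [hcdR, hcdR2]
            simp only [Set.mem_Ioo] at hx
            push_cast
            exact ⟨by linarith [hx.1], by linarith [hx.2]⟩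
          refine ⟨n+1, torb β (k+1), 1, le_of_lt ht1.1, ht1.2, by norm_num, le_refl 1,
            ?_, fun _ => hAu, fun _ => hKv⟩
          have : min (β*δ) 1 ≤ 1 := min_le_right _ _
          linarith [ht1.1]
    · obtain ⟨hb1, hb2⟩ := piece_bounds hJ hcl (by linarith)
      by_cases hcz : c = 0
      · -- c = 0 : no split possible
        have hc2 : β * t ≤ (c:ℝ) + 1 := le_of_lt hclt
        have hc1' : (c:ℝ) ≤ β * (t - δ) := by
          rw [hcz]; push_cast; nlinarith [hb1]
        have himg := (img_Ioo hβ0 c hc1' (le_of_lt hclt)).trans (img_step hcl)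
        have hnew : HRc β J₀ (k+1) (β*δ) (n+1) := by
          intro x hx
          apply himg
          rw [htv] at hx
          simp only [Set.mem_Ioo] at hx ⊢
          exact ⟨by linarith [hx.1], by linarith [hx.2]⟩
        obtain ⟨n', u, v, h1, h2, h3, h4, h5, h6, h7⟩ :=
          ih (k+1) (β*δ) (n+1) (by positivity) (Or.inl hnew) hfuel'
        exact ⟨n', u, v, h1, h2, h3, h4, le_trans hsummono h5, h6, h7⟩
      · have hc1 : (1:ℝ) ≤ (c:ℝ) := by
          have : (1:ℤ) ≤ c := by omega
          exact_mod_cast this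
        by_cases hz : (c:ℝ) = β * t
        · -- the orbit point is exactly a discontinuity
          have hmaxlt : max (t-δ) (((c:ℝ)-1)/β) < t := by
            apply max_lt (by linarith)
            rw [div_lt_iff₀ hβ0]; linarith
          have hsub : Set.Ioo (max (t-δ) (((c:ℝ)-1)/β)) t ⊆ img β J₀ n := by
            refine Set.Subset.trans ?_ hcl
            intro x hx
            exact ⟨lt_of_le_of_lt (le_max_left _ _) hx.1, hx.2⟩
          have hcm : ((c:ℝ)-1) ≤ β * max (t-δ) (((c:ℝ)-1)/β) := by
            have : β * (((c:ℝ)-1)/β) = (c:ℝ)-1 := mul_div_cancel₀ _ (ne_of_gt hβ0)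
            nlinarith [le_max_right (t-δ) (((c:ℝ)-1)/β), this]
          have himg := (img_Ioo hβ0 (c-1) (by push_cast; linarith [hcm])
              (by push_cast; linarith)).trans (img_step hsub)
          have hAu : Aclaim β J₀ (min (β*δ) 1) (n+1) := by
            by_cases hmx : ((c:ℝ)-1)/β ≤ t-δ
            · have hmaxeq : max (t-δ) (((c:ℝ)-1)/β) = t-δ := max_eq_left hmx
              have hb : (c:ℝ)-1 ≤ β*(t-δ) := by
                rw [div_le_iff₀ hβ0] at hmx; nlinarith [hmx]
              have humin : min (β*δ) 1 = β*δ := by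
                apply min_eq_left; nlinarith [hb, hz]
              intro x hx
              apply himg
              rw [hmaxeq]
              rw [humin] at hx
              simp only [Set.mem_Ioo] at hx ⊢
              push_cast
              constructor
              · nlinarith [hx.1, hz]
              · nlinarith [hx.2, hz]
            · push_neg at hmx
              have hmaxeq : max (t-δ) (((c:ℝ)-1)/β) = ((c:ℝ)-1)/β := by
                apply max_eq_right; linarith
              have hb : β*(t-δ) < (c:ℝ)-1 := by
                rw [lt_div_iff₀ hβ0] at hmx; nlinarith [hmx]
              have humin : min (β*δ) 1 = 1 := by
                apply min_eq_right; nlinarith [hb, hz]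
              have hcm1 : β * (((c:ℝ)-1)/β) = (c:ℝ)-1 := mul_div_cancel₀ _ (ne_of_gt hβ0)
              intro x hx
              apply himg
              rw [hmaxeq, hcm1]
              rw [humin] at hx
              simp only [Set.mem_Ioo] at hx ⊢
              push_cast
              constructor
              · nlinarith [hx.1, hz]
              · nlinarith [hx.2, hz]
          refine ⟨n+1, min (β*δ) 1, 0, ?_, min_le_right _ _, le_refl 0, by norm_num, ?_,
            fun _ => hAu, fun h0 => absurd h0 (lt_irrefl 0)⟩
          · positivity
          · simp
        · -- c ≥ 1, βt > c : generic case
          have hzlt : (c:ℝ) < β * t := lt_of_le_of_ne hcle hz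
          by_cases hsp : (c:ℝ)/β ≤ t - δ
          · -- no split
            have hc1' : (c:ℝ) ≤ β*(t-δ) := by
              rw [div_le_iff₀ hβ0] at hsp; nlinarith [hsp]
            have himg := (img_Ioo hβ0 c hc1' (le_of_lt hclt)).trans (img_step hcl)
            have hnew : HRc β J₀ (k+1) (β*δ) (n+1) := by
              intro x hx
              apply himg
              rw [htv] at hx
              simp only [Set.mem_Ioo] at hx ⊢
              exact ⟨by linarith [hx.1], by linarith [hx.2]⟩
            obtain ⟨n', u, v, h1, h2, h3, h4, h5, h6, h7⟩ :=
              ih (k+1) (β*δ) (n+1) (by positivity) (Or.inl hnew) hfuel'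
            exact ⟨n', u, v, h1, h2, h3, h4, le_trans hsummono h5, h6, h7⟩
          · -- split
            push_neg at hsp
            have hspb : β*(t-δ) < (c:ℝ) := by
              rw [lt_div_iff₀ hβ0] at hsp; nlinarith [hsp]
            -- right product : K piece with v = βt - c
            have hcdc : β * ((c:ℝ)/β) = (c:ℝ) := mul_div_cancel₀ _ (ne_of_gt hβ0)
            have hsubR : Set.Ico ((c:ℝ)/β) t ⊆ img β J₀ n := by
              refine Set.Subset.trans ?_ hcl
              intro x hx
              exact ⟨lt_of_lt_of_le hsp hx.1, hx.2⟩
            have himgR := (img_Ico hβ0 c (le_of_eq hcdc.symm) (le_of_lt hclt)).trans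
                (img_step hsubR)
            have hKv : Kclaim β J₀ (β*t - (c:ℝ)) (n+1) := by
              intro x hx
              apply himgR
              rw [hcdc]
              simp only [Set.mem_Ioo] at hx
              exact ⟨by linarith [hx.1], by linarith [hx.2]⟩
            -- left product : A piece with u = min (βδ - (βt - c)) 1
            have hmaxlt : max (t-δ) (((c:ℝ)-1)/β) < (c:ℝ)/β := by
              apply max_lt
              · linarith
              · rw [div_lt_div_iff_of_pos_right hβ0]; linarith
            have hsubL : Set.Ioo (max (t-δ) (((c:ℝ)-1)/β)) ((c:ℝ)/β) ⊆ img β J₀ n := by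
              refine Set.Subset.trans ?_ hcl
              intro x hx
              refine ⟨lt_of_le_of_lt (le_max_left _ _) hx.1, ?_⟩
              have hct : (c:ℝ)/β ≤ t := by rw [div_le_iff₀ hβ0]; linarith
              linarith [hx.2]
            have hcm : ((c:ℝ)-1) ≤ β * max (t-δ) (((c:ℝ)-1)/β) := by
              have : β * (((c:ℝ)-1)/β) = (c:ℝ)-1 := mul_div_cancel₀ _ (ne_of_gt hβ0)
              nlinarith [le_max_right (t-δ) (((c:ℝ)-1)/β), this]
            have himgL := (img_Ioo hβ0 (c-1) (by push_cast; linarith [hcm])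
                (by rw [hcdc]; push_cast; linarith)).trans (img_step hsubL)
            have hAu : Aclaim β J₀ (min (β*δ - (β*t - (c:ℝ))) 1) (n+1) := by
              by_cases hmx : ((c:ℝ)-1)/β ≤ t-δ
              · have hmaxeq : max (t-δ) (((c:ℝ)-1)/β) = t-δ := max_eq_left hmx
                have hb : (c:ℝ)-1 ≤ β*(t-δ) := by
                  rw [div_le_iff₀ hβ0] at hmx; nlinarith [hmx]
                have humin : min (β*δ - (β*t - (c:ℝ))) 1 = β*δ - (β*t - (c:ℝ)) := by
                  apply min_eq_left; nlinarith [hb]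
                intro x hx
                apply himgL
                rw [hmaxeq]
                rw [humin] at hx
                simp only [Set.mem_Ioo] at hx ⊢
                push_cast
                constructor
                · nlinarith [hx.1]
                · nlinarith [hx.2]
              · push_neg at hmx
                have hmaxeq : max (t-δ) (((c:ℝ)-1)/β) = ((c:ℝ)-1)/β := by
                  apply max_eq_right; linarith
                have hb : β*(t-δ) < (c:ℝ)-1 := by
                  rw [lt_div_iff₀ hβ0] at hmx; nlinarith [hmx]
                have humin : min (β*δ - (β*t - (c:ℝ))) 1 = 1 := by
                  apply min_eq_right; nlinarith [hb]
                have hcm1 : β * (((c:ℝ)-1)/β) = (c:ℝ)-1 := mul_div_cancel₀ _ (ne_of_gt hβ0)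
                intro x hx
                apply himgL
                rw [hmaxeq, hcm1]
                rw [humin] at hx
                simp only [Set.mem_Ioo] at hx ⊢
                push_cast
                constructor
                · nlinarith [hx.1]
                · nlinarith [hx.2]
            refine ⟨n+1, min (β*δ - (β*t - (c:ℝ))) 1, β*t - (c:ℝ), ?_, min_le_right _ _,
              by linarith, by linarith, ?_, fun _ => hAu, fun _ => hKv⟩
            · have : 0 < β*δ - (β*t - (c:ℝ)) := by nlinarith [hspb]
              positivity
            · rcases le_or_gt (β*δ - (β*t - (c:ℝ))) 1 with hle | hlt
              · rw [min_eq_left hle]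
                have : min (β*δ) 1 ≤ β*δ := min_le_left _ _
                nlinarith [hzlt]
              · rw [min_eq_right (le_of_lt hlt)]
                have : min (β*δ) 1 ≤ 1 := min_le_right _ _
                nlinarith [hzlt]


lemma phase0 (h : Nice β) (hJ : J₀ ⊆ Set.Ioc 0 1) :
    ∀ (k : ℕ) (p q : ℝ) (n : ℕ), Set.Ioo p q ⊆ img β J₀ n → p < q → 1 < β^k * (q - p) →
    ∃ n' m, 0 < m ∧ m ≤ 1 ∧ Kclaim β J₀ m n' := by
  have hβ0 := h.pos
  have hβ1 : (1:ℝ) < β := by linarith [h.one_lt]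
  intro k
  induction k with
  | zero =>
    intro p q n hcl hpq hfuel
    rw [pow_zero, one_mul] at hfuel
    obtain ⟨h1, h2⟩ := piece_bounds hJ hcl hpq
    exfalso; linarith
  | succ k ih =>
    intro p q n hcl hpq hfuel
    obtain ⟨hb1, hb2⟩ := piece_bounds hJ hcl hpq
    set c := ⌊β * p⌋ with hcdef
    have hcle : (c:ℝ) ≤ β * p := Int.floor_le _
    have hclt : β * p < (c:ℝ) + 1 := Int.lt_floor_add_one _
    have hc0z : (0:ℤ) ≤ c := Int.floor_nonneg.mpr (by nlinarith)
    clear_value c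
    clear hcdef
    by_cases hsp : q ≤ ((c:ℝ)+1)/β
    · have hc2 : β * q ≤ (c:ℝ) + 1 := by
        rw [le_div_iff₀ hβ0] at hsp; linarith [hsp]
      have himg := (img_Ioo hβ0 c hcle hc2).trans (img_step hcl)
      have hfuel' : 1 < β^k * (((c:ℝ)+1-β*p) - ((c:ℝ)+1-β*q)) := by
        have : ((c:ℝ)+1-β*p) - ((c:ℝ)+1-β*q) = β*(q-p) := by ring
        rw [this]
        rw [pow_succ] at hfuel
        nlinarith [hfuel]
      exact ih _ _ (n+1) himg (by nlinarith) hfuel'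
    · push_neg at hsp
      have hcb : (c:ℝ)+1 < β*q := by rw [div_lt_iff₀ hβ0] at hsp; linarith [hsp]
      have hlow : p < ((c:ℝ)+1)/β := by rw [lt_div_iff₀ hβ0]; linarith
      have hcdR : β * (((c:ℝ)+1)/β) = (c:ℝ)+1 := mul_div_cancel₀ _ (ne_of_gt hβ0)
      by_cases hvv : q ≤ ((c:ℝ)+2)/β
      · have hsubR : Set.Ico (((c:ℝ)+1)/β) q ⊆ img β J₀ n := by
          refine Set.Subset.trans ?_ hcl
          intro x hx
          exact ⟨lt_of_lt_of_le hlow hx.1, hx.2⟩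
        have hc2 : β * q ≤ ((c:ℝ)+1) + 1 := by
          rw [le_div_iff₀ hβ0] at hvv; linarith [hvv]
        have himg := (img_Ico hβ0 (c+1) (by push_cast; rw [hcdR])
            (by push_cast; linarith)).trans (img_step hsubR)
        refine ⟨n+1, β*q - ((c:ℝ)+1), by linarith, by linarith, ?_⟩
        intro x hx
        apply himg
        rw [hcdR]
        simp only [Set.mem_Ioo] at hx
        push_cast
        exact ⟨by linarith [hx.1], by linarith [hx.2]⟩
      · push_neg at hvv
        have hsubR : Set.Ico (((c:ℝ)+1)/β) (((c:ℝ)+2)/β) ⊆ img β J₀ n := by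
          refine Set.Subset.trans ?_ hcl
          intro x hx
          exact ⟨lt_of_lt_of_le hlow hx.1, lt_trans hx.2 hvv⟩
        have hcdR2 : β * (((c:ℝ)+2)/β) = (c:ℝ)+2 := mul_div_cancel₀ _ (ne_of_gt hβ0)
        have himg := (img_Ico hβ0 (c+1) (by push_cast; rw [hcdR])
            (by push_cast; rw [hcdR2]; linarith)).trans (img_step hsubR)
        refine ⟨n+1, 1, by norm_num, le_refl 1, ?_⟩
        intro x hx
        apply himg
        rw [hcdR, hcdR2]
        simp only [Set.mem_Ioo] at hx
        push_cast
        exact ⟨by linarith [hx.1], by linarith [hx.2]⟩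

lemma Gd_forever (h : Nice β) {n₁ : ℕ} (hG : Gd β J₀ n₁) : ∀ n ≥ n₁, Gd β J₀ n := by
  intro n hn
  induction n, hn using Nat.le_induction with
  | base => exact hG
  | succ n hn ihn => exact Gd_succ h ihn

lemma chainA (h : Nice β) (hφs : β + 1 < β*β) :
    ∀ (i : ℕ) (a : ℝ) (n₂ : ℕ), (β-1) * Fr β ≤ a → a ≤ 1 →
    (∀ n ≥ n₂, Aclaim β J₀ a n) →
    1/β ≤ a + i * ((β*β-1)*((β-1)*Fr β) - Fr β) →
    Done β J₀ := by
  have hβ0 := h.pos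
  have hβ1 : (1:ℝ) < β := by linarith [h.one_lt]
  have hβ16 := h.one_lt
  have hFr0 := h.frac_pos
  have hFr1 := h.frac_lt_one
  have hFrd : Fr β = β - (⌊β⌋:ℝ) := rfl
  intro i
  induction i with
  | zero =>
    intro a n₂ ha1 ha2 hA hi
    push_cast at hi
    rw [zero_mul] at hi
    exact win_done h (hA n₂ (le_refl _)) (by linarith)
  | succ i ih =>
    intro a n₂ ha1 ha2 hA hi
    by_cases hwin : 1/β ≤ a
    · exact win_done h (hA n₂ (le_refl _)) hwin
    · push_neg at hwin
      have ha0 : 0 < a := lt_of_lt_of_le (by nlinarith [hFr0]) ha1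
      have hKm : Fr β / β < β * a := by
        rw [div_lt_iff₀ hβ0]
        -- Fr < β*a*β  ⟸  a ≥ (β-1)*Fr and β²(β-1) > 1
        nlinarith [hFr0, ha1]
      have hA' : ∀ n ≥ n₂ + 2, Aclaim β J₀ (min (β*(β*a) - Fr β) 1) n := by
        intro n hn
        obtain ⟨m, hm, rfl⟩ : ∃ m, m ≥ n₂ ∧ n = m + 2 := ⟨n-2, by omega, by omega⟩
        exact Ksplit_spawnA h (AtoK h (hA m hm) ha0 (le_of_lt hwin)) hKm
      by_cases hbig : 1 ≤ β*(β*a) - Fr β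
      · have : min (β*(β*a) - Fr β) 1 = 1 := min_eq_right hbig
        rw [this] at hA'
        refine win_done h (hA' (n₂+2) (le_refl _)) ?_
        rw [div_le_one hβ0]; linarith
      · push_neg at hbig
        have hmineq : min (β*(β*a) - Fr β) 1 = β*(β*a) - Fr β := min_eq_left (le_of_lt hbig)
        rw [hmineq] at hA'
        have hstep : a + ((β*β-1)*((β-1)*Fr β) - Fr β) ≤ β*(β*a) - Fr β := by
          nlinarith [ha1, hFr0]
        refine ih (β*(β*a) - Fr β) (n₂+2) ?_ (le_of_lt hbig) hA' ?_
        · nlinarith [ha1, hFr0]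
        · push_cast at hi ⊢
          nlinarith [hi, hstep]

lemma good_done_strict (h : Nice β) (hφs : β + 1 < β*β) {n₁ : ℕ} (hG : Gd β J₀ n₁) :
    Done β J₀ := by
  have hβ0 := h.pos
  have hβ1 : (1:ℝ) < β := by linarith [h.one_lt]
  have hFr0 := h.frac_pos
  have hFr1 := h.frac_lt_one
  have hGs := Gd_forever h hG
  have hAs : ∀ n ≥ n₁ + 1, Aclaim β J₀ (min ((β-1) * Fr β) 1) n := by
    intro n hn
    obtain ⟨m, hm, rfl⟩ : ∃ m, m ≥ n₁ ∧ n = m + 1 := ⟨n-1, by omega, by omega⟩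
    exact Gd_spawnA h (hGs m hm)
  have hFrd : Fr β = β - (⌊β⌋:ℝ) := rfl
  by_cases hbig : 1 ≤ (β-1) * Fr β
  · rw [min_eq_right hbig] at hAs
    refine win_done h (hAs (n₁+1) (le_refl _)) ?_
    rw [div_le_one hβ0]; linarith
  · push_neg at hbig
    rw [min_eq_left (le_of_lt hbig)] at hAs
    set ε := (β*β-1)*((β-1)*Fr β) - Fr β with hεdef
    have hε0 : 0 < ε := by
      rw [hεdef]
      have hF0' : 0 < Fr β := Fr_pos h
      have key : 1 < (β*β-1)*(β-1) := by nlinarith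
      nlinarith [mul_lt_mul_of_pos_right key hF0']
    obtain ⟨i, hi⟩ := exists_nat_ge ((1/β - (β-1)*Fr β)/ε)
    refine chainA h hφs i ((β-1)*Fr β) (n₁+1) (le_refl _) (le_of_lt hbig) hAs ?_
    rw [div_le_iff₀ hε0] at hi
    linarith [hi]

lemma LK (h : Nice β) (hJ : J₀ ⊆ Set.Ioc 0 1) (hφs : β + 1 < β*β) :
    ∀ (N : ℕ) (m : ℝ) (n : ℕ), 0 < m → m ≤ 1 → Kclaim β J₀ m n →
    Fr β / β < (β*β/(β+1))^N * m → Done β J₀ := by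
  have hβ0 := h.pos
  have hβ1 : (1:ℝ) < β := by linarith [h.one_lt]
  have hFr0 := h.frac_pos
  have hFr1 := h.frac_lt_one
  set γ := β*β/(β+1) with hγdef
  have hγ1 : 1 < γ := by
    rw [hγdef, lt_div_iff₀ (by linarith)]
    linarith
  have hγ0 : 0 < γ := by linarith
  intro N
  induction N with
  | zero =>
    intro m n hm0 hm1 hK hfuel
    rw [pow_zero, one_mul] at hfuel
    exact good_done_strict h hφs (Kgood h hK hfuel)
  | succ N ih =>
    intro m n hm0 hm1 hK hfuel
    by_cases hm : Fr β / β < m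
    · exact good_done_strict h hφs (Kgood h hK hm)
    · push_neg at hm
      have hHR : HRc β J₀ 1 (β*m) (n+1) := Knosplit h hK hm0 hm
      have hβm0 : 0 < β*m := by positivity
      obtain ⟨j, hj⟩ := pow_unbounded_of_one_lt (1/(β*m)) hβ1
      have hfuelj : 1 < β^j * (β*m) := by
        rw [div_lt_iff₀ hβm0] at hj
        nlinarith [hj]
      obtain ⟨n', u, v, hu0, hu1, hv0, hv1, hsum, hAc, hKc⟩ :=
        Lrun h hJ j 1 (β*m) (n+1) hβm0 (Or.inl hHR) hfuelj
      set S := min (β*(β*m)) 1 with hSdef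
      have hS0 : 0 < S := by
        rw [hSdef]
        apply lt_min (by positivity) (by norm_num)
      have hSkey : Fr β / β < γ^N * (β*S/(β+1)) := by
        rcases min_cases (β*(β*m)) 1 with ⟨hc, _⟩ | ⟨hc, hcc⟩
        · -- S = β²m
          have : β*S/(β+1) = γ*(β*m) := by
            rw [hSdef, hc, hγdef]; field_simp
          rw [this]
          have h2 : γ^N * (γ*(β*m)) = γ^(N+1) * (β*m) := by rw [pow_succ]; ring
          rw [h2]
          have h3 : γ^(N+1) * m ≤ γ^(N+1) * (β*m) := by
            have : m ≤ β*m := by nlinarith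
            exact mul_le_mul_of_nonneg_left this (by positivity)
          linarith [hfuel, h3]
        · -- S = 1
          have hSeq : S = 1 := by rw [hSdef, hc]
          have hγN : 1 ≤ γ^N := one_le_pow₀ (le_of_lt hγ1)
          have hval : Fr β / β < β*1/(β+1) := by
            rw [div_lt_div_iff₀ hβ0 (by linarith)]
            have hF1' : Fr β < 1 := Fr_lt_one h
            nlinarith [hF1']
          have : β*S/(β+1) ≤ γ^N * (β*S/(β+1)) := by
            apply le_mul_of_one_le_left _ hγN
            rw [hSeq]; positivity
          rw [hSeq] at this ⊢
          linarith [hval, this]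
      by_cases hvbig : β*S/(β+1) ≤ v
      · -- recurse with v
        have hv0' : 0 < v := lt_of_lt_of_le (by positivity) hvbig
        refine ih v n' hv0' hv1 (hKc hv0') ?_
        calc Fr β / β < γ^N * (β*S/(β+1)) := hSkey
        _ ≤ γ^N * v := mul_le_mul_of_nonneg_left hvbig (by positivity)
      · push_neg at hvbig
        have hubig : S/(β+1) ≤ u := by
          have hsum' : S ≤ u + v := by
            rw [hSdef]
            exact hsum
          have : S - β*S/(β+1) = S/(β+1) := by field_simp; ring
          linarith [hsum', hvbig, this]
        have hu0' : 0 < u := lt_of_lt_of_le (by positivity) hubig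
        by_cases hwin : 1/β ≤ u
        · exact win_done h (hAc hu0') hwin
        · push_neg at hwin
          have hK' : Kclaim β J₀ (β*u) (n'+1) := AtoK h (hAc hu0') hu0' (le_of_lt hwin)
          refine ih (β*u) (n'+1) (by positivity) ?_ hK' ?_
          · have : u * β ≤ 1 := by
              rw [← le_div_iff₀ hβ0]; exact le_of_lt hwin
            linarith [this, mul_comm u β]
          · calc Fr β / β < γ^N * (β*S/(β+1)) := hSkey
            _ ≤ γ^N * (β*u) := by
                apply mul_le_mul_of_nonneg_left _ (by positivity)
                rw [div_le_iff₀ (show (0:ℝ) < β+1 by linarith)] at hubig ⊢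
                nlinarith [hubig]


section Phi

variable (hphi : β = (1 + Real.sqrt 5)/2)

include hphi

lemma phi_sq (h : Nice β) : β*β = β + 1 := by
  have h5 : Real.sqrt 5 ^ 2 = 5 := Real.sq_sqrt (by norm_num)
  have : 2*β - 1 = Real.sqrt 5 := by rw [hphi]; ring
  nlinarith [h5, this]

lemma phi_lt_two (h : Nice β) : β < 2 := by
  have h9 : Real.sqrt 5 < 3 := by
    have : (3:ℝ) = Real.sqrt 9 := by
      rw [show (9:ℝ) = 3^2 by norm_num, Real.sqrt_sq]; norm_num
    rw [this]
    apply Real.sqrt_lt_sqrt <;> norm_num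
  rw [hphi]; linarith

lemma phi_floor (h : Nice β) : (⌊β⌋:ℝ) = 1 := by
  have h1 : ⌊β⌋ = 1 := by
    apply floor_eq_c
    · push_cast; linarith [h.one_lt]
    · push_cast; linarith [phi_lt_two hphi h]
  exact_mod_cast h1

lemma phi_Fr (h : Nice β) : Fr β = β - 1 := by
  unfold Fr; rw [phi_floor hphi h]

lemma phi_torb (h : Nice β) : ∀ k, 1 ≤ k → torb β k = 2 - β := by
  have hβ1 : (1:ℝ) < β := by linarith [h.one_lt]
  have hsq := phi_sq hphi h
  have h2 := phi_lt_two hphi h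
  intro k hk
  induction k with
  | zero => omega
  | succ k ihk =>
    rcases Nat.eq_or_lt_of_le hk with heq | hlt
    · rw [← heq]
      rw [torb_one h, phi_floor hphi h]; ring
    · have hk1 : 1 ≤ k := by omega
      rw [torb_succ, ihk hk1]
      have hc1 : ((0:ℤ):ℝ) ≤ β * (2-β) := by push_cast; nlinarith [h.one_lt]
      have hc2 : β * (2-β) < ((0:ℤ):ℝ) + 1 := by push_cast; nlinarith [h.one_lt]
      rw [Tneg_val hc1 hc2]; push_cast; nlinarith [h.one_lt]

lemma RunPhi (h : Nice β) (hJ : J₀ ⊆ Set.Ioc 0 1) :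
    ∀ (j : ℕ) (δ : ℝ) (n : ℕ), 0 < δ →
    (Set.Ioo (2-β) (2-β+δ) ⊆ img β J₀ n ∨ Set.Ioo (2-β-δ) (2-β) ⊆ img β J₀ n) →
    1 < β^j * δ →
    ∃ n', Aclaim β J₀ (2-β) n' := by
  have hβ0 := h.pos
  have hβ1 : (1:ℝ) < β := by linarith [h.one_lt]
  have hβ16 := h.one_lt
  have hsq := phi_sq hphi h
  have hb2 := phi_lt_two hphi h
  intro j
  induction j with
  | zero =>
    intro δ n hδ hcl hfuel
    rw [pow_zero, one_mul] at hfuel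
    exfalso
    rcases hcl with hcl | hcl
    · obtain ⟨h1, h2⟩ := piece_bounds hJ hcl (by linarith)
      linarith
    · obtain ⟨h1, h2⟩ := piece_bounds hJ hcl (by linarith)
      linarith
  | succ j ih =>
    intro δ n hδ hcl hfuel
    have hfuel' : 1 < β^j * (β*δ) := by
      rw [pow_succ] at hfuel; nlinarith [hfuel]
    rcases hcl with hcl | hcl
    · by_cases hsp : 2-β+δ ≤ β-1
      · -- no split
        have hc1 : ((0:ℤ):ℝ) ≤ β * (2-β) := by push_cast; nlinarith
        have hc2 : β * (2-β+δ) ≤ ((0:ℤ):ℝ) + 1 := by push_cast; nlinarith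
        have himg := (img_Ioo hβ0 0 hc1 hc2).trans (img_step hcl)
        refine ih (β*δ) (n+1) (by positivity) (Or.inr ?_) hfuel'
        intro x hx
        apply himg
        simp only [Set.mem_Ioo] at hx ⊢
        push_cast
        constructor
        · nlinarith [hx.1]
        · nlinarith [hx.2]
      · -- split : left piece gives Ioo 0 (2-β)
        push_neg at hsp
        have hsubL : Set.Ioo (2-β) (β-1) ⊆ img β J₀ n := by
          refine Set.Subset.trans ?_ hcl
          intro x hx
          exact ⟨hx.1, by linarith [hx.2]⟩
        have hc1 : ((0:ℤ):ℝ) ≤ β * (2-β) := by push_cast; nlinarith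
        have hc2 : β * (β-1) ≤ ((0:ℤ):ℝ) + 1 := by push_cast; nlinarith
        have himg := (img_Ioo hβ0 0 hc1 hc2).trans (img_step hsubL)
        refine ⟨n+1, ?_⟩
        intro x hx
        apply himg
        simp only [Set.mem_Ioo] at hx ⊢
        push_cast
        constructor
        · nlinarith [hx.1]
        · nlinarith [hx.2]
    · -- left-side piece
      obtain ⟨hb1', hb2'⟩ := piece_bounds hJ hcl (by linarith)
      have hc1 : ((0:ℤ):ℝ) ≤ β * (2-β-δ) := by push_cast; nlinarith
      have hc2 : β * (2-β) ≤ ((0:ℤ):ℝ) + 1 := by push_cast; nlinarith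
      have himg := (img_Ioo hβ0 0 hc1 hc2).trans (img_step hcl)
      refine ih (β*δ) (n+1) (by positivity) (Or.inl ?_) hfuel'
      intro x hx
      apply himg
      simp only [Set.mem_Ioo] at hx ⊢
      push_cast
      constructor
      · nlinarith [hx.1]
      · nlinarith [hx.2]

lemma good_done_phi (h : Nice β) {n₁ : ℕ} (hG : Gd β J₀ n₁) : Done β J₀ := by
  have hβ0 := h.pos
  have hβ1 : (1:ℝ) < β := by linarith [h.one_lt]
  have hβ16 := h.one_lt
  have hsq := phi_sq hphi h
  have hb2 := phi_lt_two hphi h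
  have hFr := phi_Fr hphi h
  have hGs := Gd_forever h hG
  have hAs : ∀ n ≥ n₁ + 1, Aclaim β J₀ (2-β) n := by
    intro n hn
    obtain ⟨m, hm, rfl⟩ : ∃ m, m ≥ n₁ ∧ n = m + 1 := ⟨n-1, by omega, by omega⟩
    have := Gd_spawnA h (hGs m hm)
    have heq : min ((β-1) * Fr β) 1 = 2-β := by
      rw [hFr]
      rw [min_eq_left (by nlinarith)]
      nlinarith
    rwa [heq] at this
  refine ⟨n₁+2, ?_⟩
  intro n hn x hx
  rcases lt_trichotomy x (2-β) with hlt | heq | hgt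
  · exact hAs n (by omega) ⟨hx.1, hlt⟩
  · obtain ⟨m, hm, rfl⟩ : ∃ m, m ≥ n₁ ∧ n = m + 1 := ⟨n-1, by omega, by omega⟩
    have h1 : (1:ℝ) ∈ img β J₀ m := one_mem_Gd h (hGs m hm)
    have h2 := mem_img_step h1
    rw [Tneg_one h, hFr] at h2
    rw [heq]
    have heq2 : (1:ℝ) - (β-1) = 2-β := by ring
    rwa [heq2] at h2
  · apply hGs n (by omega)
    rw [hFr]
    refine ⟨by linarith, le_of_lt hx.2⟩

lemma LKphi (h : Nice β) (hJ : J₀ ⊆ Set.Ioc 0 1) {m : ℝ} {n : ℕ} (hm0 : 0 < m)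
    (hK : Kclaim β J₀ m n) : Done β J₀ := by
  have hβ0 := h.pos
  have hβ1 : (1:ℝ) < β := by linarith [h.one_lt]
  have hβ16 := h.one_lt
  have hsq := phi_sq hphi h
  have hb2 := phi_lt_two hphi h
  have hFr := phi_Fr hphi h
  by_cases hm : Fr β / β < m
  · exact good_done_phi hphi h (Kgood h hK hm)
  · push_neg at hm
    have hHR : HRc β J₀ 1 (β*m) (n+1) := Knosplit h hK hm0 hm
    have hβm0 : 0 < β*m := by positivity
    obtain ⟨j, hj⟩ := pow_unbounded_of_one_lt (1/(β*m)) hβ1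
    have hfuelj : 1 < β^j * (β*m) := by
      rw [div_lt_iff₀ hβm0] at hj
      nlinarith [hj]
    have hHR' : Set.Ioo (2-β) (2-β+β*m) ⊆ img β J₀ (n+1) := by
      have ht1 : torb β 1 = 2-β := phi_torb hphi h 1 (le_refl 1)
      rw [HRc, ht1] at hHR
      exact hHR
    obtain ⟨n', hA⟩ := RunPhi hphi h hJ j (β*m) (n+1) hβm0 (Or.inl hHR') hfuelj
    have h2β : 0 < 2-β := by linarith
    have hle : 2-β ≤ 1/β := by
      rw [le_div_iff₀ hβ0]; nlinarith
    have hK' : Kclaim β J₀ (β*(2-β)) (n'+1) := AtoK h hA h2β hle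
    have hKm' : Fr β / β < β*(2-β) := by
      rw [div_lt_iff₀ hβ0, hFr]
      nlinarith
    exact good_done_phi hphi h (Kgood h hK' hKm')

end Phi

/-- The main covering lemma : the iterated images of any nondegenerate interval
eventually cover `(0,1)` forever. -/
lemma machine (h : Nice β) {p q : ℝ} (hpq : p < q) (hJ : Set.Ioo p q ⊆ Set.Ioc 0 1) :
    Done β (Set.Ioo p q) := by
  have hβ0 := h.pos
  have hβ1 : (1:ℝ) < β := by linarith [h.one_lt]
  have hqp0 : 0 < q - p := by linarith
  obtain ⟨k, hk⟩ := pow_unbounded_of_one_lt (1/(q-p)) hβ1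
  have hfuel : 1 < β^k * (q-p) := by
    rw [div_lt_iff₀ hqp0] at hk
    nlinarith [hk]
  have hcl0 : Set.Ioo p q ⊆ img β (Set.Ioo p q) 0 := by rw [img_zero]
  obtain ⟨n', m, hm0, hm1, hK⟩ := phase0 h hJ k p q 0 hcl0 hpq hfuel
  rcases eq_or_lt_of_le h.hgold with hphi | hlt
  · exact LKphi hphi.symm h hJ hm0 hK
  · have hφs : β + 1 < β*β := by
      have h5 : Real.sqrt 5 ^ 2 = 5 := Real.sq_sqrt (by norm_num)
      have h2 : Real.sqrt 5 < 2*β - 1 := by linarith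
      nlinarith [h5, h2, Real.sqrt_nonneg 5]
    have hγ1 : 1 < β*β/(β+1) := by
      rw [lt_div_iff₀ (by linarith)]; linarith
    obtain ⟨N, hN⟩ := pow_unbounded_of_one_lt ((Fr β / β)/m) hγ1
    refine LK h hJ hφs N m n' hm0 hm1 hK ?_
    rw [div_lt_iff₀ hm0] at hN
    nlinarith [hN]

end Machine

/-! ### Cylinders: side intervals with constant digits -/

def sideAt (σ : Bool) (i : ℕ) : Bool := if Even i then σ else !σ

def Valid (β t : ℝ) (k : ℕ) (σ : Bool) : Prop :=
  ∀ i < k, (sideAt σ i = true → (Tneg β)^[i] t ≠ 1) ∧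
    (sideAt σ i = false → ∀ z : ℤ, β * (Tneg β)^[i] t ≠ (z:ℝ))

noncomputable def sideInt (t : ℝ) (σ : Bool) (ε : ℝ) : Set ℝ :=
  if σ then Set.Ico t (t+ε) else Set.Ioc (t-ε) t

lemma sideInt_true (t ε : ℝ) : sideInt t true ε = Set.Ico t (t+ε) := if_pos rfl

lemma sideInt_false (t ε : ℝ) : sideInt t false ε = Set.Ioc (t-ε) t := if_neg (by simp)

lemma sideInt_mono (t : ℝ) (σ : Bool) {ε ε' : ℝ} (hε : ε ≤ ε') :
    sideInt t σ ε ⊆ sideInt t σ ε' := by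
  cases σ
  · rw [sideInt_false, sideInt_false]
    exact Set.Ioc_subset_Ioc_left (by linarith)
  · rw [sideInt_true, sideInt_true]
    exact Set.Ico_subset_Ico_right (by linarith)

lemma Tneg_of_int {β x : ℝ} (z : ℤ) (hz : β * x = (z:ℝ)) : Tneg β x = 1 := by
  unfold Tneg
  have hfl : ⌊β * x⌋ = z := by rw [hz, Int.floor_intCast]
  rw [hfl]
  have : -β * x = -(β*x) := by ring
  rw [this, hz]
  ring

lemma sideAt_not (σ : Bool) (i : ℕ) : sideAt (!σ) i = sideAt σ (i+1) := by
  unfold sideAt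
  by_cases he : Even i
  · rw [if_pos he, if_neg (by simp [Nat.even_add_one, he])]
  · rw [if_neg he, if_pos (Nat.even_add_one.mpr he), Bool.not_not]

lemma Valid_shift {β t : ℝ} {k : ℕ} {σ : Bool} (hv : Valid β t (k+1) σ) :
    Valid β (Tneg β t) k (!σ) := by
  intro i hi
  have := hv (i+1) (by omega)
  simp only [sideAt_not, ← Function.iterate_succ_apply]
  exact this

lemma sideC_base {β : ℝ} (h : Nice β) (t : ℝ) (σ : Bool) (ht : t ∈ Set.Ioc (0:ℝ) 1)
    (hv1 : σ = true → t ≠ 1) (hv2 : σ = false → ∀ z : ℤ, β * t ≠ (z:ℝ)) :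
    ∃ ε > 0, ∀ ε', 0 < ε' → ε' ≤ ε → ∀ s ∈ sideInt t σ ε',
      s ∈ Set.Ioc (0:ℝ) 1 ∧ ⌊β*s⌋ = ⌊β*t⌋ ∧
      Tneg β s ∈ sideInt (Tneg β t) (!σ) (β*ε') := by
  have hβ0 := h.pos
  set c := ⌊β * t⌋ with hcdef
  have hcle : (c:ℝ) ≤ β * t := Int.floor_le _
  have hclt : β * t < (c:ℝ) + 1 := Int.lt_floor_add_one _
  have htv : Tneg β t = (c:ℝ)+1-β*t := Tneg_val hcle hclt
  cases σ with
  | true =>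
    have ht1 : t ≠ 1 := hv1 rfl
    have htlt : t < 1 := lt_of_le_of_ne ht.2 ht1
    refine ⟨min (1-t) (((c:ℝ)+1-β*t)/β), lt_min (by linarith) (div_pos (by linarith) hβ0), ?_⟩
    intro ε' hε'0 hε'le s hs
    rw [sideInt_true, Set.mem_Ico] at hs
    have hs1 : t ≤ s := hs.1
    have hs2 : s < t + ε' := hs.2
    have hd1 : ε' ≤ 1 - t := le_trans hε'le (min_le_left _ _)
    have hd2 : ε' ≤ ((c:ℝ)+1-β*t)/β := le_trans hε'le (min_le_right _ _)
    have hd2' : β * ε' ≤ (c:ℝ)+1-β*t := by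
      rw [le_div_iff₀ hβ0] at hd2; linarith [hd2]
    have hsfl : ⌊β * s⌋ = c := by
      apply floor_eq_c
      · calc (c:ℝ) ≤ β*t := hcle
        _ ≤ β*s := by nlinarith
      · nlinarith [hs2]
    have hsv : Tneg β s = (c:ℝ)+1-β*s := by
      apply Tneg_val
      · rw [← hsfl]; exact Int.floor_le _
      · rw [← hsfl]; exact Int.lt_floor_add_one _
    refine ⟨⟨by linarith [ht.1], by linarith⟩, hsfl, ?_⟩
    rw [Bool.not_true, sideInt_false, Set.mem_Ioc, htv, hsv]
    constructor
    · nlinarith [hs2]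
    · nlinarith [hs1]
  | false =>
    have hnz : ∀ z : ℤ, β * t ≠ (z:ℝ) := hv2 rfl
    have hcstrict : (c:ℝ) < β * t := lt_of_le_of_ne hcle (fun heq => hnz c heq.symm)
    refine ⟨min t ((β*t-(c:ℝ))/β), lt_min ht.1 (div_pos (by linarith) hβ0), ?_⟩
    intro ε' hε'0 hε'le s hs
    rw [sideInt_false, Set.mem_Ioc] at hs
    have hs1 : t - ε' < s := hs.1
    have hs2 : s ≤ t := hs.2
    have hd1 : ε' ≤ t := le_trans hε'le (min_le_left _ _)
    have hd2 : ε' ≤ (β*t-(c:ℝ))/β := le_trans hε'le (min_le_right _ _)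
    have hd2' : β * ε' ≤ β*t-(c:ℝ) := by
      rw [le_div_iff₀ hβ0] at hd2; linarith [hd2]
    have hsfl : ⌊β * s⌋ = c := by
      apply floor_eq_c
      · nlinarith [hs1]
      · calc β*s ≤ β*t := by nlinarith
        _ < (c:ℝ)+1 := hclt
    have hsv : Tneg β s = (c:ℝ)+1-β*s := by
      apply Tneg_val
      · rw [← hsfl]; exact Int.floor_le _
      · rw [← hsfl]; exact Int.lt_floor_add_one _
    refine ⟨⟨by linarith, le_trans hs2 ht.2⟩, hsfl, ?_⟩
    rw [Bool.not_false, sideInt_true, Set.mem_Ico, htv, hsv]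
    constructor
    · nlinarith [hs2]
    · nlinarith [hs1]

/-- Main side-interval lemma: if the side is valid, an entire half-open interval
on that side of `t` shares the first `k+1` digits with `t`. -/
lemma sideC {β : ℝ} (h : Nice β) :
    ∀ (k : ℕ) (t : ℝ) (σ : Bool), t ∈ Set.Ioc (0:ℝ) 1 → Valid β t (k+1) σ →
    ∃ ε > 0, ∀ s ∈ sideInt t σ ε,
      s ∈ Set.Ioc (0:ℝ) 1 ∧ ∀ i < k+1, dExp β s i = dExp β t i := by
  have hβ0 := h.pos
  intro k
  induction k with
  | zero =>
    intro t σ ht hv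
    have hv0 := hv 0 (by omega)
    simp only [sideAt, if_pos (Even.zero), Function.iterate_zero_apply] at hv0
    obtain ⟨ε, hε, hprop⟩ := sideC_base h t σ ht hv0.1 hv0.2
    refine ⟨ε, hε, ?_⟩
    intro s hs
    obtain ⟨hIoc, hfl, _⟩ := hprop ε hε (le_refl _) s hs
    refine ⟨hIoc, ?_⟩
    intro i hi
    interval_cases i
    unfold dExp
    simp only [Function.iterate_zero_apply]
    rw [hfl]
  | succ k ih =>
    intro t σ ht hv
    obtain ⟨ε₁, hε₁, hIH⟩ := ih (Tneg β t) (!σ) (Tneg_mem_Ioc β t) (Valid_shift hv)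
    have hv0 := hv 0 (by omega)
    simp only [sideAt, if_pos (Even.zero), Function.iterate_zero_apply] at hv0
    obtain ⟨ε₀, hε₀, hprop⟩ := sideC_base h t σ ht hv0.1 hv0.2
    set ε := min ε₀ (ε₁/β) with hεdef
    have hεpos : 0 < ε := by positivity
    refine ⟨ε, hεpos, ?_⟩
    intro s hs
    obtain ⟨hsIoc, hfl, hTmap⟩ := hprop ε hεpos (min_le_left _ _) s hs
    have hβε : β * ε ≤ ε₁ := by
      have : ε ≤ ε₁/β := min_le_right _ _
      rw [le_div_iff₀ hβ0] at this
      linarith [this]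
    have hTs : Tneg β s ∈ sideInt (Tneg β t) (!σ) ε₁ :=
      sideInt_mono _ _ hβε hTmap
    obtain ⟨_, hdig⟩ := hIH (Tneg β s) hTs
    refine ⟨hsIoc, ?_⟩
    intro i hi
    cases i with
    | zero =>
      unfold dExp
      simp only [Function.iterate_zero_apply]
      rw [hfl]
    | succ i =>
      have e1 : dExp β s (i+1) = dExp β (Tneg β s) i := by
        unfold dExp; rw [Function.iterate_succ_apply]
      have e2 : dExp β t (i+1) = dExp β (Tneg β t) i := by
        unfold dExp; rw [Function.iterate_succ_apply]
      rw [e1, e2]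
      exact hdig i (by omega)


lemma valid_fail {β t : ℝ} {k : ℕ} {σ : Bool} (hnv : ¬ Valid β t k σ) :
    ∃ m, m ≤ k ∧ (Even m ↔ σ = true) ∧ (Tneg β)^[m] t = 1 := by
  unfold Valid at hnv
  rw [not_forall] at hnv
  obtain ⟨i, hi⟩ := hnv
  rw [Classical.not_imp] at hi
  obtain ⟨hik, hfail⟩ := hi
  cases hb : sideAt σ i with
  | true =>
    have hQ : sideAt σ i = false → ∀ z : ℤ, β * (Tneg β)^[i] t ≠ (z:ℝ) := by
      intro hf; rw [hb] at hf; exact absurd hf (by simp)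
    have hP : ¬ (sideAt σ i = true → (Tneg β)^[i] t ≠ 1) := fun hp => hfail ⟨hp, hQ⟩
    have hone : (Tneg β)^[i] t = 1 := by
      by_contra hne
      exact hP (fun _ => hne)
    refine ⟨i, le_of_lt hik, ?_, hone⟩
    unfold sideAt at hb
    by_cases he : Even i
    · rw [if_pos he] at hb
      simp [he, hb]
    · rw [if_neg he] at hb
      have : σ = false := by
        cases σ
        · rfl
        · simp at hb
      simp [he, this]
  | false =>
    have hP : sideAt σ i = true → (Tneg β)^[i] t ≠ 1 := by
      intro hf; rw [hb] at hf; exact absurd hf (by simp)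
    have hQ : ¬ (sideAt σ i = false → ∀ z : ℤ, β * (Tneg β)^[i] t ≠ (z:ℝ)) :=
      fun hq => hfail ⟨hP, hq⟩
    have hz : ∃ z : ℤ, β * (Tneg β)^[i] t = (z:ℝ) := by
      by_contra hne
      push_neg at hne
      exact hQ (fun _ => hne)
    obtain ⟨z, hz⟩ := hz
    have hone : (Tneg β)^[i+1] t = 1 := by
      rw [Function.iterate_succ_apply']
      exact Tneg_of_int z hz
    refine ⟨i+1, by omega, ?_, hone⟩
    unfold sideAt at hb
    by_cases he : Even i
    · rw [if_pos he] at hb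
      have he1 : ¬ Even (i+1) := by simp [Nat.even_add_one, he]
      simp [he1, hb]
    · rw [if_neg he] at hb
      have : σ = true := by
        cases σ
        · simp at hb
        · rfl
      simp [Nat.even_add_one, he, this]

lemma valid_choice {β : ℝ}
    (hodd : ∀ n : ℕ, 0 < n → Odd n → (Tneg β)^[n] 1 ≠ 1) (t : ℝ) (k : ℕ) :
    Valid β t k true ∨ Valid β t k false := by
  by_contra hc
  push_neg at hc
  obtain ⟨h1, h2⟩ := hc
  obtain ⟨a, hak, haE, ha1⟩ := valid_fail h1
  obtain ⟨b, hbk, hbE, hb1⟩ := valid_fail h2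
  have haEven : Even a := haE.mpr rfl
  have hbOdd : Odd b := by
    rw [← Nat.not_even_iff_odd]
    intro hbe
    simpa using hbE.mp hbe
  have key : ∀ (x y : ℕ), x < y → (Tneg β)^[x] t = 1 → (Tneg β)^[y] t = 1 →
      (Tneg β)^[y - x] 1 = 1 := by
    intro x y hxy hx hy
    have : (Tneg β)^[(y - x) + x] t = (Tneg β)^[y-x] ((Tneg β)^[x] t) :=
      Function.iterate_add_apply _ _ _ _
    rw [hx] at this
    rw [← this]
    have : y - x + x = y := by omega
    rw [this]
    exact hy
  rcases lt_trichotomy a b with hab | hab | hab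
  · exact hodd (b - a) (by omega) (Nat.Odd.sub_even (by omega) hbOdd haEven)
      (key a b hab ha1 hb1)
  · rw [hab] at haEven
    rw [← Nat.not_odd_iff_even] at haEven
    exact haEven hbOdd
  · exact hodd (a - b) (by omega) (Nat.Even.sub_odd (by omega) haEven hbOdd)
      (key b a hab hb1 ha1)

/-- Realization: any word appearing as a prefix in the shift is the prefix of
an actual expansion. -/
lemma realize {β : ℝ} (nv : ℕ) (v : ℕ → ℕ)
    (hv : ∃ x ∈ SigmaNegBeta β, ∀ i < nv, x i = v i) :
    ∃ a ∈ Set.Ioc (0:ℝ) 1, ∀ i < nv, dExp β a i = v i := by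
  obtain ⟨x, hx, hxv⟩ := hv
  have hUeq : {y : ℕ → ℕ | ∀ i < nv, y i = v i} =
      ⋂ i ∈ Finset.range nv, {y : ℕ → ℕ | y i = v i} := by
    ext y
    simp [Finset.mem_range]
  have hU : IsOpen {y : ℕ → ℕ | ∀ i < nv, y i = v i} := by
    rw [hUeq]
    apply isOpen_biInter_finset
    intro i _
    have heq : {y : ℕ → ℕ | y i = v i} = (fun y : ℕ → ℕ => y i) ⁻¹' {v i} := rfl
    rw [heq]
    exact (isOpen_discrete _).preimage (continuous_apply i)
  have hmem : x ∈ {y : ℕ → ℕ | ∀ i < nv, y i = v i} := hxv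
  have hne := mem_closure_iff.mp hx _ hU hmem
  obtain ⟨y, hy1, hy2⟩ := hne
  obtain ⟨a, ha, rfl⟩ := hy2
  exact ⟨a, ha, hy1⟩


lemma pick_J {β : ℝ} (h : Nice β)
    (hodd : ∀ n : ℕ, 0 < n → Odd n → (Tneg β)^[n] 1 ≠ 1)
    (nv : ℕ) (v : ℕ → ℕ) (hv : ∃ x ∈ SigmaNegBeta β, ∀ i < nv, x i = v i) :
    ∃ p q : ℝ, p < q ∧ Set.Ioo p q ⊆ Set.Ioc 0 1 ∧
      ∀ s ∈ Set.Ioo p q, ∀ i < nv, dExp β s i = v i := by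
  obtain ⟨a, haIoc, hav⟩ := realize nv v hv
  obtain ⟨σa, hva⟩ : ∃ σ, Valid β a (nv+1) σ := by
    rcases valid_choice hodd a (nv+1) with h1 | h1
    exacts [⟨true, h1⟩, ⟨false, h1⟩]
  obtain ⟨ε, hε, hεs⟩ := sideC h nv a σa haIoc hva
  cases σa with
  | true =>
    refine ⟨a, a + ε, by linarith, ?_, ?_⟩
    · intro s hs
      exact (hεs s (by rw [sideInt_true]; exact ⟨le_of_lt hs.1, hs.2⟩)).1
    · intro s hs i hi
      have := (hεs s (by rw [sideInt_true]; exact ⟨le_of_lt hs.1, hs.2⟩)).2 i (by omega)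
      rw [this]
      exact hav i hi
  | false =>
    refine ⟨a - ε, a, by linarith, ?_, ?_⟩
    · intro s hs
      exact (hεs s (by rw [sideInt_false]; exact ⟨hs.1, le_of_lt hs.2⟩)).1
    · intro s hs i hi
      have := (hεs s (by rw [sideInt_false]; exact ⟨hs.1, le_of_lt hs.2⟩)).2 i (by omega)
      rw [this]
      exact hav i hi

lemma pick_b {β : ℝ} (h : Nice β)
    (hodd : ∀ n : ℕ, 0 < n → Odd n → (Tneg β)^[n] 1 ≠ 1)
    (nw : ℕ) (w : ℕ → ℕ) (hw : ∃ x ∈ SigmaNegBeta β, ∀ i < nw, x i = w i) :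
    ∃ b ∈ Set.Ioo (0:ℝ) 1, ∀ i < nw, dExp β b i = w i := by
  obtain ⟨b₀, hbIoc, hbw⟩ := realize nw w hw
  obtain ⟨σb, hvb⟩ : ∃ σ, Valid β b₀ (nw+1) σ := by
    rcases valid_choice hodd b₀ (nw+1) with h1 | h1
    exacts [⟨true, h1⟩, ⟨false, h1⟩]
  obtain ⟨ε, hε, hεs⟩ := sideC h nw b₀ σb hbIoc hvb
  cases σb with
  | true =>
    have hb0mem : b₀ ∈ sideInt b₀ true ε := by
      rw [sideInt_true]; exact ⟨le_refl _, by linarith⟩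
    have hbI := (hεs b₀ hb0mem).1
    have hne1 : b₀ ≠ 1 := by
      have := (hvb 0 (by omega)).1
      simp only [sideAt, if_pos Even.zero, Function.iterate_zero_apply] at this
      simp at this
      exact this
    refine ⟨b₀, ⟨hbI.1, lt_of_le_of_ne hbI.2 hne1⟩, ?_⟩
    intro i hi
    rw [(hεs b₀ hb0mem).2 i (by omega)]
    exact hbw i hi
  | false =>
    have hbmem : b₀ - ε/2 ∈ sideInt b₀ false ε := by
      rw [sideInt_false]; exact ⟨by linarith, by linarith⟩
    have hbI := (hεs _ hbmem).1
    refine ⟨b₀ - ε/2, ⟨hbI.1, by linarith [hbIoc.2]⟩, ?_⟩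
    intro i hi
    rw [(hεs _ hbmem).2 i (by omega)]
    exact hbw i hi

end NBaux

/-- If `β ≥ (1+√5)/2` and `d_{−β}(1)` is not periodic with odd period, then the
(−β)-shift is topologically mixing. -/
theorem neg_beta_shift_topologically_mixing (β : ℝ) (hβ : (1 + Real.sqrt 5) / 2 ≤ β)
    (hper : ¬ ∃ n : ℕ, 0 < n ∧ Odd n ∧ ∀ i, dExp β 1 (i + n) = dExp β 1 i)
    (nv : ℕ) (v : ℕ → ℕ) (hv : ∃ x ∈ SigmaNegBeta β, ∀ i < nv, x i = v i)
    (nw : ℕ) (w : ℕ → ℕ) (hw : ∃ x ∈ SigmaNegBeta β, ∀ i < nw, x i = w i) :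
    ∃ N : ℕ, ∀ n ≥ N, ∃ x ∈ SigmaNegBeta β,
      (∀ i < nv, x i = v i) ∧ ∀ i < nw, x (n + i) = w i := by
  classical
  have hint : ∀ z : ℤ, β ≠ (z:ℝ) := by
    intro z heq
    apply hper
    refine ⟨1, one_pos, odd_one, ?_⟩
    have hT1 : Tneg β 1 = 1 := by
      apply NBaux.Tneg_of_int z
      rw [mul_one, heq]
    have hiter : ∀ i, (Tneg β)^[i] 1 = 1 := fun i => Function.iterate_fixed hT1 i
    intro i
    unfold dExp
    rw [hiter (i+1), hiter i]
  have h : NBaux.Nice β := ⟨hβ, hint⟩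
  have hodd : ∀ n : ℕ, 0 < n → Odd n → (Tneg β)^[n] 1 ≠ 1 := by
    intro n hn ho he
    apply hper
    refine ⟨n, hn, ho, ?_⟩
    intro i
    rw [add_comm i n, NBaux.dExp_add, he]
  obtain ⟨p, q, hpq, hsub2, hdigJ⟩ := NBaux.pick_J h hodd nv v hv
  obtain ⟨b, hbIoo, hdigb⟩ := NBaux.pick_b h hodd nw w hw
  obtain ⟨N, hN⟩ := NBaux.machine h hpq hsub2
  refine ⟨N, ?_⟩
  intro n hn
  have hbimg : b ∈ NBaux.img β (Set.Ioo p q) n := hN n hn hbIoo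
  obtain ⟨x₀, hx₀mem, hx₀eq⟩ := hbimg
  refine ⟨dExp β x₀, ?_, ?_, ?_⟩
  · exact subset_closure ⟨x₀, hsub2 hx₀mem, rfl⟩
  · intro i hi
    exact hdigJ x₀ hx₀mem i hi
  · intro i hi
    rw [NBaux.dExp_add, hx₀eq]
    exact hdigb i hi
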